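/- For h ∈ SL₂^±(R) with σ₁(h) > σ₂(h) and any r ∈ [σ₂(h)/σ₁(h), 1/10), the image h(b(h⁻, r)) of the attracting region satisfies B(h⁺, (σ₂(h)/σ₁(h))/(2r)) ⊆ h(b(h⁻, r)) ⊆ B(h⁺, (σ₂(h)/σ₁(h))/r²). -/

import Mathlib

/- STATEMENT 14: For h ∈ SL₂^±(ℝ) with σ₁(h) > σ₂(h) (Cartan decomposition
h = k' ∘ diag(a) ∘ k, a 0 > a 1 > 0, a 0 * a 1 = 1) and r ∈ [σ₂/σ₁, 1/10),
B(h⁺, (σ₂/σ₁)/(2r)) ⊆ h(b(h⁻, r)) ⊆ B(h⁺, (σ₂/σ₁)/r²) in P(ℝ²), where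
h⁺ = k' e₁ is the attracting point and h⁻ = k⁻¹ e₂ the repelling point. -/

open scoped RealInnerProductSpace
noncomputable section

/-- Projective distance `d(ℝv, ℝw) = ‖v ∧ w‖ / (‖v‖ ‖w‖)`. -/
def projDist {n : ℕ} (v w : EuclideanSpace ℝ (Fin n)) : ℝ :=
  Real.sqrt (‖v‖ ^ 2 * ‖w‖ ^ 2 - ⟪v, w⟫ ^ 2) / (‖v‖ * ‖w‖)

/-- Distance from the projective point `ℝv` to the projective hyperplane with
normal vector `u`. -/
def distToHyp {n : ℕ} (v u : EuclideanSpace ℝ (Fin n)) : ℝ :=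
  |⟪v, u⟫| / (‖v‖ * ‖u‖)

/-- The diagonal map with entries `a`. -/
def diagMap {n : ℕ} (a : Fin n → ℝ) (v : EuclideanSpace ℝ (Fin n)) :
    EuclideanSpace ℝ (Fin n) :=
  (WithLp.equiv 2 (Fin n → ℝ)).symm (fun i => a i * v i)

lemma diagMap_apply {n : ℕ} (a : Fin n → ℝ) (v : EuclideanSpace ℝ (Fin n)) (i : Fin n) :
    diagMap a v i = a i * v i := rfl

lemma norm_sq_two (z : EuclideanSpace ℝ (Fin 2)) : ‖z‖ ^ 2 = z 0 ^ 2 + z 1 ^ 2 := by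
  rw [EuclideanSpace.norm_eq, Real.sq_sqrt (by positivity)]
  simp [Fin.sum_univ_two, sq_abs]

lemma inner_two (v w : EuclideanSpace ℝ (Fin 2)) : ⟪v, w⟫ = v 0 * w 0 + v 1 * w 1 := by
  simp [PiLp.inner_apply, Fin.sum_univ_two, RCLike.inner_apply, conj_trivial]
  ring

lemma projDist_two (v w : EuclideanSpace ℝ (Fin 2)) :
    projDist v w = |v 0 * w 1 - v 1 * w 0| / (‖v‖ * ‖w‖) := by
  unfold projDist
  have e : ‖v‖ ^ 2 * ‖w‖ ^ 2 - ⟪v, w⟫ ^ 2 = (v 0 * w 1 - v 1 * w 0) ^ 2 := by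
    rw [norm_sq_two, norm_sq_two, inner_two]; ring
  rw [e, Real.sqrt_sq_eq_abs]

lemma projDist_map {n : ℕ} (f : EuclideanSpace ℝ (Fin n) ≃ₗᵢ[ℝ] EuclideanSpace ℝ (Fin n))
    (v w : EuclideanSpace ℝ (Fin n)) : projDist (f v) (f w) = projDist v w := by
  unfold projDist
  rw [f.norm_map, f.norm_map, f.inner_map_map]

lemma projDist_smul {n : ℕ} (c : ℝ) (v w : EuclideanSpace ℝ (Fin n)) (hc : c ≠ 0) :
    projDist (c • v) w = projDist v w := by
  unfold projDist
  rw [norm_smul, real_inner_smul_left, Real.norm_eq_abs]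
  have e : (|c| * ‖v‖) ^ 2 * ‖w‖ ^ 2 - (c * ⟪v, w⟫) ^ 2
      = c ^ 2 * (‖v‖ ^ 2 * ‖w‖ ^ 2 - ⟪v, w⟫ ^ 2) := by
    rw [mul_pow, sq_abs]; ring
  rw [e, Real.sqrt_mul (sq_nonneg c), Real.sqrt_sq_eq_abs, mul_assoc,
    mul_div_mul_left _ _ (abs_ne_zero.mpr hc)]

lemma projDist_single_one (v : EuclideanSpace ℝ (Fin 2)) :
    projDist v (EuclideanSpace.single (1 : Fin 2) 1) = |v 0| / ‖v‖ := by
  rw [projDist_two]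
  simp [EuclideanSpace.single_apply]

lemma projDist_single_zero (v : EuclideanSpace ℝ (Fin 2)) :
    projDist v (EuclideanSpace.single (0 : Fin 2) 1) = |v 1| / ‖v‖ := by
  rw [projDist_two]
  simp [EuclideanSpace.single_apply]


set_option maxHeartbeats 4000000 in
theorem image_of_attracting_region
    (h : EuclideanSpace ℝ (Fin 2) →ₗ[ℝ] EuclideanSpace ℝ (Fin 2))
    (k k' : EuclideanSpace ℝ (Fin 2) ≃ₗᵢ[ℝ] EuclideanSpace ℝ (Fin 2))
    (a : Fin 2 → ℝ) (ha : ∀ i, 0 < a i)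
    (hgap : a 1 < a 0) (hdet : a 0 * a 1 = 1)
    (hh : ∀ v, h v = k' (diagMap a (k v)))
    (r : ℝ) (hr1 : a 1 / a 0 ≤ r) (hr2 : r < 1 / 10) :
    -- `B(h⁺, (σ₂/σ₁)/(2r)) ⊆ h(b(h⁻, r))`
    (∀ y : EuclideanSpace ℝ (Fin 2), ‖y‖ = 1 →
      projDist y (k' (EuclideanSpace.single (0 : Fin 2) 1)) ≤ (a 1 / a 0) / (2 * r) →
      ∃ x : EuclideanSpace ℝ (Fin 2), ‖x‖ = 1 ∧
        r < projDist x (k.symm (EuclideanSpace.single (1 : Fin 2) 1)) ∧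
        ∃ c : ℝ, c ≠ 0 ∧ h x = c • y) ∧
    -- `h(b(h⁻, r)) ⊆ B(h⁺, (σ₂/σ₁)/r²)`
    (∀ x : EuclideanSpace ℝ (Fin 2), x ≠ 0 →
      r < projDist x (k.symm (EuclideanSpace.single (1 : Fin 2) 1)) →
      projDist (h x) (k' (EuclideanSpace.single (0 : Fin 2) 1)) ≤ (a 1 / a 0) / r ^ 2) := by
  have ha0 := ha 0
  have ha1 := ha 1
  have heps : a 1 / a 0 = a 1 * a 1 := by
    rw [div_eq_iff (ne_of_gt (ha 0))]
    linear_combination (-(a 1)) * hdet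
  have hrpos : 0 < r := lt_of_lt_of_le (div_pos ha1 ha0) hr1
  have ha1r : a 1 * a 1 ≤ r := heps ▸ hr1
  constructor
  · -- first inclusion
    intro y hy hle
    set w := k'.symm y with hw_def
    have hwy : k' w = y := k'.apply_symm_apply y
    have hw : ‖w‖ = 1 := by rw [hw_def, k'.symm.norm_map, hy]
    have hw1 : |w 1| ≤ a 1 * a 1 / (2 * r) := by
      rw [← hwy, projDist_map k', projDist_single_zero, hw, div_one, heps] at hle
      exact hle
    have hwsum : w 0 ^ 2 + w 1 ^ 2 = 1 := by
      have := norm_sq_two w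
      rw [hw] at this; linarith [this]
    have hW1sq : 4 * r ^ 2 * w 1 ^ 2 ≤ (a 1 * a 1) ^ 2 := by
      have h2 : 2 * r * |w 1| ≤ a 1 * a 1 := by
        rw [le_div_iff₀ (by positivity)] at hw1
        linarith
      have h3 := mul_self_le_mul_self (by positivity : (0:ℝ) ≤ 2 * r * |w 1|) h2
      nlinarith [sq_abs (w 1), h3]
    have hW1quarter : w 1 ^ 2 ≤ 1 / 4 := by
      nlinarith [hW1sq, mul_self_le_mul_self (le_of_lt (mul_pos ha1 ha1)) ha1r,
        mul_pos hrpos hrpos]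
    have hW0 : 3 / 4 ≤ w 0 ^ 2 := by linarith
    set v : EuclideanSpace ℝ (Fin 2) :=
      (WithLp.equiv 2 (Fin 2 → ℝ)).symm ![a 1 * w 0, a 0 * w 1] with hv_def
    have hv0 : v 0 = a 1 * w 0 := rfl
    have hv1 : v 1 = a 0 * w 1 := rfl
    have hvsq : ‖v‖ ^ 2 = (a 1 * w 0) ^ 2 + (a 0 * w 1) ^ 2 := by
      rw [norm_sq_two, hv0, hv1]
    have key : r * ‖v‖ < |v 0| := by
      have e1 : a 0 ^ 2 * (4 * r ^ 2 * w 1 ^ 2) ≤ a 0 ^ 2 * (a 1 * a 1) ^ 2 :=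
        mul_le_mul_of_nonneg_left hW1sq (sq_nonneg _)
      have e2 : a 0 ^ 2 * (a 1 * a 1) ^ 2 = a 1 ^ 2 := by
        linear_combination (a 1 ^ 2 * (a 0 * a 1 + 1)) * hdet
      have e3 : r ^ 2 < 1 / 100 := by nlinarith
      have e4 : (0:ℝ) < a 1 ^ 2 := by positivity
      have e5 : (0:ℝ) < w 0 ^ 2 := by linarith
      have e7 : (0:ℝ) < (a 1 * w 0) ^ 2 := by rw [mul_pow]; exact mul_pos e4 e5
      have e6 : r ^ 2 * (a 1 * w 0) ^ 2 < (1 / 100) * (a 1 * w 0) ^ 2 := by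
        nlinarith [e3, e7]
      have e8 : a 1 ^ 2 * (3 / 4) ≤ a 1 ^ 2 * w 0 ^ 2 :=
        mul_le_mul_of_nonneg_left hW0 (le_of_lt e4)
      have h2 : (r * ‖v‖) ^ 2 < |v 0| ^ 2 := by
        rw [sq_abs, hv0, mul_pow, hvsq]
        nlinarith [e1, e2, e6, e8]
      exact lt_of_pow_lt_pow_left₀ 2 (abs_nonneg _) h2
    have hv0le : |v 0| ≤ ‖v‖ := by
      apply le_of_pow_le_pow_left₀ two_ne_zero (norm_nonneg _)
      rw [sq_abs, hvsq, hv0]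
      nlinarith [sq_nonneg (a 0 * w 1)]
    have hvpos : 0 < ‖v‖ := by
      nlinarith [norm_nonneg v, key, hv0le, hrpos]
    refine ⟨k.symm (‖v‖⁻¹ • v), ?_, ?_, ‖v‖⁻¹, inv_ne_zero (ne_of_gt hvpos), ?_⟩
    · rw [k.symm.norm_map, norm_smul, norm_inv, norm_norm,
        inv_mul_cancel₀ (ne_of_gt hvpos)]
    · rw [projDist_map k.symm, projDist_smul _ _ _ (inv_ne_zero (ne_of_gt hvpos)),
        projDist_single_one]
      rw [lt_div_iff₀ hvpos]
      linarith [key]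
    · rw [hh, k.apply_symm_apply]
      have hdm : diagMap a (‖v‖⁻¹ • v) = ‖v‖⁻¹ • w := by
        have hav : diagMap a v = w := by
          ext i
          fin_cases i
          · show a 0 * v 0 = w 0
            rw [hv0]; linear_combination w 0 * hdet
          · show a 1 * v 1 = w 1
            rw [hv1]; linear_combination w 1 * hdet
        ext i
        show a i * (‖v‖⁻¹ • v) i = ‖v‖⁻¹ * w i
        rw [PiLp.smul_apply, smul_eq_mul, ← hav, diagMap_apply]
        ring
      rw [hdm, map_smul, hwy]
  · -- second inclusion
    intro x hx hxr
    set u := k x with hu_def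
    have hu : (0 : ℝ) < ‖u‖ := by
      rw [hu_def, k.norm_map]; exact norm_pos_iff.mpr hx
    have hxr' : r * ‖u‖ < |u 0| := by
      have e := projDist_map k x (k.symm (EuclideanSpace.single 1 1))
      rw [k.apply_symm_apply, projDist_single_one] at e
      rw [← hu_def] at e
      rw [← e, lt_div_iff₀ hu] at hxr
      linarith
    set z := diagMap a u with hz_def
    have hz2 : ‖z‖ ^ 2 = (a 0 * u 0) ^ 2 + (a 1 * u 1) ^ 2 := by
      rw [hz_def, norm_sq_two, diagMap_apply, diagMap_apply]
    have hz1 : z 1 = a 1 * u 1 := by rw [hz_def, diagMap_apply]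
    have hzge : a 0 * |u 0| ≤ ‖z‖ := by
      apply le_of_pow_le_pow_left₀ two_ne_zero (norm_nonneg _)
      rw [hz2, mul_pow, sq_abs]
      nlinarith [sq_nonneg (a 1 * u 1)]
    have hu1 : |u 1| ≤ ‖u‖ := by
      apply le_of_pow_le_pow_left₀ two_ne_zero (norm_nonneg _)
      rw [sq_abs]
      nlinarith [norm_sq_two u, sq_nonneg (u 0)]
    have hzpos : 0 < ‖z‖ := by
      have h1 : 0 < a 0 * |u 0| := by
        apply mul_pos ha0
        calc (0:ℝ) < r * ‖u‖ := mul_pos hrpos hu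
        _ < |u 0| := hxr'
      linarith
    have hd : projDist (h x) (k' (EuclideanSpace.single (0 : Fin 2) 1))
        = |a 1 * u 1| / ‖z‖ := by
      rw [hh, projDist_map k', ← hu_def, ← hz_def, projDist_single_zero, hz1]
    clear_value u z
    rw [hd, heps, div_le_div_iff₀ hzpos (by positivity)]
    have habs : |a 1 * u 1| = a 1 * |u 1| := by
      rw [abs_mul, abs_of_pos ha1]
    rw [habs]
    have c1 : a 1 * |u 1| * r ^ 2 ≤ a 1 * r * |u 1| := by
      have hrr : r ^ 2 ≤ r := by nlinarith
      nlinarith [hrr, mul_nonneg (le_of_lt ha1) (abs_nonneg (u 1))]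
    have c2 : a 1 * r * |u 1| ≤ a 1 * (r * ‖u‖) := by
      nlinarith [mul_pos ha1 hrpos]
    have c3 : a 1 * (r * ‖u‖) ≤ a 1 * |u 0| := by
      nlinarith
    have c4 : a 1 * |u 0| = a 1 * a 1 * (a 0 * |u 0|) := by
      linear_combination (-(a 1 * |u 0|)) * hdet
    have c5 : a 1 * a 1 * (a 0 * |u 0|) ≤ a 1 * a 1 * ‖z‖ := by
      nlinarith [mul_pos ha1 ha1]
    linarith [c1, c2, c3, c4, c5]
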